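/- Let n ≥ 2 be an integer and z ∈ ℂ with |z|² = n, Im z > 0, and z² ∈ ℤ + zℤ (the periodicity condition). Then there exists an integer D with D² < 4n (equivalently D ∈ ℤ ∩ (−2√n, 2√n)) such that z = D/2 + i·√(n − (D/2)²) and z² = Dz − n. -/

import Mathlib

theorem stmt_7 (n : ℕ) (hn : 2 ≤ n) (z : ℂ)
    (habs : ‖z‖ ^ 2 = n) (him : 0 < z.im)
    (hper : ∃ a b : ℤ, z ^ 2 = (a : ℂ) + (b : ℂ) * z) :
    ∃ D : ℤ, D ^ 2 < 4 * n ∧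
      z = (D : ℂ) / 2 + Complex.I * (Real.sqrt ((n : ℝ) - ((D : ℝ) / 2) ^ 2) : ℝ) ∧
      z ^ 2 = (D : ℂ) * z - (n : ℂ) := by
  obtain ⟨a, b, h⟩ := hper
  set x := z.re with hx
  set y := z.im with hy
  rw [Complex.sq_norm, Complex.normSq_apply] at habs
  have h' := h
  rw [Complex.ext_iff] at h'
  simp [pow_two, Complex.mul_re, Complex.mul_im, Complex.add_re, Complex.add_im,
    ← hx, ← hy] at h'
  obtain ⟨hre, him'⟩ := h'
  have hb : (b : ℝ) = 2 * x := by
    have hy0 : y ≠ 0 := ne_of_gt him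
    have : y * (b : ℝ) = y * (2 * x) := by nlinarith [him']
    exact mul_left_cancel₀ hy0 this
  have ha : (a : ℝ) = -(n : ℝ) := by
    have hbx : (b : ℝ) * x = 2 * x * x := by rw [hb]
    nlinarith [hre, habs]
  have hy2 : y ^ 2 = (n : ℝ) - x ^ 2 := by nlinarith [habs]
  refine ⟨b, ?_, ?_, ?_⟩
  · have hylt : 0 < y ^ 2 := by positivity
    have : ((b : ℝ)) ^ 2 < 4 * (n : ℝ) := by nlinarith
    exact_mod_cast this
  · apply Complex.ext
    · simp [Complex.add_re, Complex.mul_re, ← hx, hb]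
    · simp [Complex.add_im, Complex.mul_im, ← hy]
      rw [hb]
      rw [show (n : ℝ) - ((2*x) / 2) ^ 2 = y ^ 2 by rw [hy2]; ring]
      exact (Real.sqrt_sq him.le).symm
  · have : (a : ℂ) = -(n : ℂ) := by
      rw [Complex.ext_iff]; constructor <;> simp [ha]
    rw [h, this]; ring
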